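/- Let n be an odd integer greater than 1, C > 0, and let N be the smallest integer with N ≥ π^{-2}C + 1. For t ∈ (-1,1] and integers k with |k| ≥ N, define the open disks U(k,t) = {λ ∈ ℂ : |λ - (2πk+πt)^n| < (3/2)π^{n-2}C|2k+t|^{n-2}} and the strip S(N,t) = {λ ∈ ℂ : Re λ ∈ [(-2πN+π+πt)^n, (2πN-π+πt)^n)}. Then the closures of S(N,t) and of the disks U(k,t) for |k| ≥ N are pairwise disjoint. -/

import Mathlib

open Real Complex

private lemma gapLem (m : ℕ) (x y : ℝ) (hy : 0 ≤ y) (hxy : y ≤ x) :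
    (x - y) * (x ^ (m + 1) + y ^ (m + 1)) ≤ x ^ (m + 2) - y ^ (m + 2) := by
  have h1 : y ^ m ≤ x ^ m := pow_le_pow_left₀ hy hxy m
  have h2 : 0 ≤ x * y := mul_nonneg (hy.trans hxy) hy
  have key : x ^ (m + 2) - y ^ (m + 2) - (x - y) * (x ^ (m + 1) + y ^ (m + 1))
      = x * y * (x ^ m - y ^ m) := by ring
  nlinarith [mul_nonneg h2 (sub_nonneg.2 h1), key]

private lemma keyA (m : ℕ) (C d x y : ℝ) (hy : 0 < y) (hd : 0 < d)
    (hxy : y + d ≤ x) (hK : 3 / 2 * C < d * x) :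
    3 / 2 * C * x ^ m < x ^ (m + 2) - y ^ (m + 2) := by
  have hx : 0 < x := by linarith
  have hg := gapLem m x y hy.le (by linarith)
  have h1 : d * x ^ (m + 1) ≤ (x - y) * (x ^ (m + 1) + y ^ (m + 1)) := by
    nlinarith [mul_nonneg (by linarith : (0:ℝ) ≤ x - y - d) (pow_nonneg hx.le (m + 1)),
      mul_nonneg (by linarith : (0:ℝ) ≤ x - y) (pow_nonneg hy.le (m + 1))]
  have h2 : 3 / 2 * C * x ^ m < d * x ^ (m + 1) := by
    calc 3 / 2 * C * x ^ m < (d * x) * x ^ m :=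
          mul_lt_mul_of_pos_right hK (pow_pos hx m)
      _ = d * x ^ (m + 1) := by ring
  linarith

private lemma keyB (m : ℕ) (C x y : ℝ) (hy : 0 < y)
    (hxy : y + 2 * π ≤ x) (hKy : 3 / 2 * C < 2 * π * y) :
    3 / 2 * C * x ^ m + 3 / 2 * C * y ^ m < x ^ (m + 2) - y ^ (m + 2) := by
  have hπ := Real.pi_pos
  have hx : 0 < x := by linarith
  have hg := gapLem m x y hy.le (by linarith)
  have h1 : 2 * π * x ^ (m + 1) + 2 * π * y ^ (m + 1)
      ≤ (x - y) * (x ^ (m + 1) + y ^ (m + 1)) := by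
    nlinarith [mul_nonneg (by linarith : (0:ℝ) ≤ x - y - 2 * π) (pow_nonneg hx.le (m + 1)),
      mul_nonneg (by linarith : (0:ℝ) ≤ x - y - 2 * π) (pow_nonneg hy.le (m + 1))]
  have hKx : 3 / 2 * C < 2 * π * x := by
    nlinarith [mul_pos hπ (show (0:ℝ) < x - y by linarith)]
  have h2 : 3 / 2 * C * x ^ m < 2 * π * x ^ (m + 1) := by
    calc 3 / 2 * C * x ^ m < (2 * π * x) * x ^ m :=
          mul_lt_mul_of_pos_right hKx (pow_pos hx m)
      _ = 2 * π * x ^ (m + 1) := by ring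
  have h3 : 3 / 2 * C * y ^ m < 2 * π * y ^ (m + 1) := by
    calc 3 / 2 * C * y ^ m < (2 * π * y) * y ^ m :=
          mul_lt_mul_of_pos_right hKy (pow_pos hy m)
      _ = 2 * π * y ^ (m + 1) := by ring
  linarith

private lemma keyC (m : ℕ) (C x w : ℝ) (hx : 0 < x) (hw : 0 < w)
    (hKx : 3 / 2 * C < x ^ 2) (hKw : 3 / 2 * C < w ^ 2) :
    3 / 2 * C * x ^ m + 3 / 2 * C * w ^ m < x ^ (m + 2) + w ^ (m + 2) := by
  have h1 : 3 / 2 * C * x ^ m < x ^ (m + 2) := by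
    calc 3 / 2 * C * x ^ m < x ^ 2 * x ^ m := mul_lt_mul_of_pos_right hKx (pow_pos hx m)
      _ = x ^ (m + 2) := by ring
  have h2 : 3 / 2 * C * w ^ m < w ^ (m + 2) := by
    calc 3 / 2 * C * w ^ m < w ^ 2 * w ^ m := mul_lt_mul_of_pos_right hKw (pow_pos hw m)
      _ = w ^ (m + 2) := by ring
  linarith

set_option maxHeartbeats 1000000 in
theorem stmt3 (n : ℕ) (hn : Odd n) (hn1 : 1 < n)
    (C : ℝ) (hC : 0 < C) (N : ℤ)
    (hN : (N : ℝ) ≥ C / π ^ 2 + 1)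
    (hNmin : ∀ M : ℤ, (M : ℝ) ≥ C / π ^ 2 + 1 → N ≤ M)
    (t : ℝ) (ht : t ∈ Set.Ioc (-1 : ℝ) 1)
    (U : ℤ → Set ℂ)
    (hU : ∀ k : ℤ, U k = {lam : ℂ |
      ‖lam - ((2 * π * k + π * t) ^ n : ℝ)‖ <
        (3 / 2) * π ^ (n - 2) * C * |2 * (k : ℝ) + t| ^ (n - 2)})
    (S : Set ℂ)
    (hS : S = {lam : ℂ | lam.re ∈
      Set.Ico ((-(2 * π * N) + π + π * t) ^ n) ((2 * π * N - π + π * t) ^ n)}) :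
    (∀ k : ℤ, N ≤ |k| → Disjoint (closure S) (closure (U k))) ∧
    (∀ k l : ℤ, N ≤ |k| → N ≤ |l| → k ≠ l →
      Disjoint (closure (U k)) (closure (U l))) := by
  obtain ⟨m, rfl⟩ : ∃ m, n = m + 2 := ⟨n - 2, by omega⟩
  simp only [Nat.add_sub_cancel] at hU
  have hπ := Real.pi_pos
  obtain ⟨ht1, ht2⟩ := ht
  have hπ2 : (0:ℝ) < π ^ 2 := by positivity
  have hCπ : C ≤ ((N:ℝ) - 1) * π ^ 2 := by
    have h2 : C / π ^ 2 ≤ (N:ℝ) - 1 := by linarith [hN]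
    calc C = C / π ^ 2 * π ^ 2 := by field_simp
      _ ≤ ((N:ℝ) - 1) * π ^ 2 := mul_le_mul_of_nonneg_right h2 hπ2.le
  have hN1 : (1:ℝ) < (N:ℝ) := by nlinarith
  have base : 2 * C + π ^ 2 ≤ π ^ 2 * (2 * (N:ℝ) - 1) := by nlinarith
  -- closed ball bound for closures of disks
  have hball : ∀ k : ℤ, closure (U k) ⊆
      Metric.closedBall (((2 * π * (k:ℝ) + π * t) ^ (m + 2) : ℝ) : ℂ)
        (3 / 2 * π ^ m * C * |2 * (k : ℝ) + t| ^ m) := by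
    intro k
    have hb : U k = Metric.ball (((2 * π * (k:ℝ) + π * t) ^ (m + 2) : ℝ) : ℂ)
        (3 / 2 * π ^ m * C * |2 * (k : ℝ) + t| ^ m) := by
      rw [hU k]; ext lam
      simp [Metric.mem_ball, Complex.dist_eq]
    rw [hb]
    exact Metric.closure_ball_subset_closedBall
  have hmemU : ∀ k : ℤ, ∀ lam ∈ closure (U k),
      |lam.re - (2 * π * (k:ℝ) + π * t) ^ (m + 2)| ≤
        3 / 2 * π ^ m * C * |2 * (k : ℝ) + t| ^ m := by
    intro k lam hlam
    have h1 := hball k hlam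
    rw [Metric.mem_closedBall, Complex.dist_eq] at h1
    have h2 := Complex.abs_re_le_norm (lam - (((2 * π * (k:ℝ) + π * t) ^ (m + 2) : ℝ) : ℂ))
    rw [Complex.sub_re, Complex.ofReal_re] at h2
    exact h2.trans h1
  have hreS : ∀ lam ∈ closure S,
      (-(2 * π * (N:ℝ)) + π + π * t) ^ (m + 2) ≤ lam.re ∧
        lam.re ≤ (2 * π * (N:ℝ) - π + π * t) ^ (m + 2) := by
    intro lam hlam
    rw [hS] at hlam
    have h1 : closure (Complex.re ⁻¹' Set.Ico ((-(2 * π * (N:ℝ)) + π + π * t) ^ (m + 2))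
        ((2 * π * (N:ℝ) - π + π * t) ^ (m + 2))) ⊆
        Complex.re ⁻¹' Set.Icc ((-(2 * π * (N:ℝ)) + π + π * t) ^ (m + 2))
        ((2 * π * (N:ℝ) - π + π * t) ^ (m + 2)) :=
      (Complex.continuous_re.closure_preimage_subset _).trans
        (Set.preimage_mono (closure_minimal Set.Ico_subset_Icc_self isClosed_Icc))
    have h2 := h1 hlam
    exact ⟨h2.1, h2.2⟩
  -- radius normalizations
  have hrpos : ∀ k : ℤ, N ≤ k →
      3 / 2 * π ^ m * C * |2 * (k : ℝ) + t| ^ m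
        = 3 / 2 * C * (2 * π * (k:ℝ) + π * t) ^ m := by
    intro k hk
    have hkr : (N:ℝ) ≤ (k:ℝ) := by exact_mod_cast hk
    have h1 : (0:ℝ) < 2 * (k:ℝ) + t := by nlinarith
    rw [abs_of_pos h1, show (2 * π * (k:ℝ) + π * t) = π * (2 * (k:ℝ) + t) by ring, mul_pow]
    ring
  have hrneg : ∀ k : ℤ, N ≤ -k →
      3 / 2 * π ^ m * C * |2 * (k : ℝ) + t| ^ m
        = 3 / 2 * C * (-(2 * π * (k:ℝ) + π * t)) ^ m := by
    intro k hk
    have hkr : (N:ℝ) ≤ -(k:ℝ) := by exact_mod_cast hk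
    have h1 : 2 * (k:ℝ) + t < 0 := by nlinarith
    rw [abs_of_neg h1, show (-(2 * π * (k:ℝ) + π * t)) = π * (-(2 * (k:ℝ) + t)) by ring,
      mul_pow]
    ring
  have hoddc : ∀ u : ℝ, u ^ (m + 2) = -((-u) ^ (m + 2)) := by
    intro u; rw [Odd.neg_pow hn]; ring
  -- lower bounds on (π times) centers
  have hPiX : ∀ k : ℤ, N ≤ k → 2 * C + π ^ 2 ≤ π * (2 * π * (k:ℝ) + π * t) := by
    intro k hk
    have hkr : (N:ℝ) ≤ (k:ℝ) := by exact_mod_cast hk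
    nlinarith [base, mul_nonneg hπ2.le (show (0:ℝ) ≤ (k:ℝ) - N by linarith),
      mul_pos hπ2 (show (0:ℝ) < t + 1 by linarith)]
  have hPiZ : ∀ k : ℤ, N ≤ -k → 2 * C + π ^ 2 ≤ π * (-(2 * π * (k:ℝ) + π * t)) := by
    intro k hk
    have hkr : (N:ℝ) ≤ -(k:ℝ) := by exact_mod_cast hk
    nlinarith [base, mul_nonneg hπ2.le (show (0:ℝ) ≤ -(k:ℝ) - N by linarith),
      mul_nonneg hπ2.le (show (0:ℝ) ≤ 1 - t by linarith)]
  have posOfPi : ∀ u : ℝ, 2 * C + π ^ 2 ≤ π * u → 0 < u := by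
    intro u h
    nlinarith [hπ, hC, hπ2]
  have sqBound : ∀ u : ℝ, 2 * C + π ^ 2 ≤ π * u → 3 / 2 * C < u ^ 2 := by
    intro u h
    have h0 : (0:ℝ) ≤ 2 * C + π ^ 2 := by positivity
    nlinarith [mul_le_mul h h h0 (h0.trans h), mul_pos hC hπ2, hπ2]
  -- pairwise disk inequalities
  have hPP : ∀ k l : ℤ, N ≤ l → l < k →
      3 / 2 * π ^ m * C * |2 * (k : ℝ) + t| ^ m +
        3 / 2 * π ^ m * C * |2 * (l : ℝ) + t| ^ m <
        (2 * π * (k:ℝ) + π * t) ^ (m + 2) - (2 * π * (l:ℝ) + π * t) ^ (m + 2) := by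
    intro k l hl hlk
    have hkN : N ≤ k := by omega
    have hklr : (l:ℝ) + 1 ≤ (k:ℝ) := by exact_mod_cast hlk
    rw [hrpos k hkN, hrpos l hl]
    have hyp : 0 < 2 * π * (l:ℝ) + π * t := posOfPi _ (hPiX l hl)
    apply keyB
    · exact hyp
    · nlinarith [mul_nonneg hπ.le (show (0:ℝ) ≤ (k:ℝ) - (l:ℝ) - 1 by linarith)]
    · nlinarith [hPiX l hl, hC, hπ2]
  have hNN : ∀ k l : ℤ, N ≤ -l → k < l →
      3 / 2 * π ^ m * C * |2 * (l : ℝ) + t| ^ m +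
        3 / 2 * π ^ m * C * |2 * (k : ℝ) + t| ^ m <
        (2 * π * (l:ℝ) + π * t) ^ (m + 2) - (2 * π * (k:ℝ) + π * t) ^ (m + 2) := by
    intro k l hl hkl
    have hkN : N ≤ -k := by omega
    have hklr : (k:ℝ) + 1 ≤ (l:ℝ) := by exact_mod_cast hkl
    rw [hrneg l hl, hrneg k hkN, hoddc (2 * π * (l:ℝ) + π * t), hoddc (2 * π * (k:ℝ) + π * t)]
    have hyp : 0 < -(2 * π * (l:ℝ) + π * t) := posOfPi _ (hPiZ l hl)
    have hkey := keyB m C (-(2 * π * (k:ℝ) + π * t)) (-(2 * π * (l:ℝ) + π * t)) hyp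
      (by nlinarith [mul_nonneg hπ.le (show (0:ℝ) ≤ (l:ℝ) - (k:ℝ) - 1 by linarith)])
      (by nlinarith [hPiZ l hl, hC, hπ2])
    linarith
  have hPN : ∀ k l : ℤ, N ≤ k → N ≤ -l →
      3 / 2 * π ^ m * C * |2 * (k : ℝ) + t| ^ m +
        3 / 2 * π ^ m * C * |2 * (l : ℝ) + t| ^ m <
        (2 * π * (k:ℝ) + π * t) ^ (m + 2) - (2 * π * (l:ℝ) + π * t) ^ (m + 2) := by
    intro k l hk hl
    rw [hrpos k hk, hrneg l hl, hoddc (2 * π * (l:ℝ) + π * t)]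
    have hkey := keyC m C (2 * π * (k:ℝ) + π * t) (-(2 * π * (l:ℝ) + π * t))
      (posOfPi _ (hPiX k hk)) (posOfPi _ (hPiZ l hl))
      (sqBound _ (hPiX k hk)) (sqBound _ (hPiZ l hl))
    linarith
  constructor
  · -- strip vs disk
    intro k hk
    rw [Set.disjoint_left]
    intro lam hlamS hlamU
    have hb := hreS lam hlamS
    have hU1 := hmemU k lam hlamU
    rcases le_abs.mp hk with hk' | hk'
    · -- N ≤ k : disk lies to the right of the strip
      have hkr : (N:ℝ) ≤ (k:ℝ) := by exact_mod_cast hk'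
      rw [hrpos k hk'] at hU1
      have hyp : 0 < 2 * π * (N:ℝ) - π + π * t := by nlinarith
      have hkey := keyA m C π (2 * π * (k:ℝ) + π * t) (2 * π * (N:ℝ) - π + π * t) hyp hπ
        (by nlinarith [mul_nonneg hπ.le (show (0:ℝ) ≤ (k:ℝ) - N by linarith)])
        (by nlinarith [hPiX k hk', hC, hπ2])
      have habs := abs_le.mp hU1
      linarith [hb.2, habs.1]
    · -- N ≤ -k : disk lies to the left of the strip
      have hkr : (N:ℝ) ≤ -(k:ℝ) := by exact_mod_cast hk'
      rw [hrneg k hk', hoddc (2 * π * (k:ℝ) + π * t)] at hU1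
      have ha : (-(2 * π * (N:ℝ)) + π + π * t) ^ (m + 2)
          = -((2 * π * (N:ℝ) - π - π * t) ^ (m + 2)) := by
        rw [show (-(2 * π * (N:ℝ)) + π + π * t) = -(2 * π * (N:ℝ) - π - π * t) by ring,
          Odd.neg_pow hn]
      have hwp : 0 < 2 * π * (N:ℝ) - π - π * t := by nlinarith
      have hkey := keyA m C π (-(2 * π * (k:ℝ) + π * t)) (2 * π * (N:ℝ) - π - π * t) hwp hπ
        (by nlinarith [mul_nonneg hπ.le (show (0:ℝ) ≤ -(k:ℝ) - N by linarith)])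
        (by nlinarith [hPiZ k hk', hC, hπ2])
      have habs := abs_le.mp hU1
      rw [ha] at hb
      linarith [hb.1, habs.2]
  · -- disk vs disk
    intro k l hk hl hkl
    rw [Set.disjoint_left]
    intro lam h1 h2
    have hUk := hmemU k lam h1
    have hUl := hmemU l lam h2
    have htri : |(2 * π * (k:ℝ) + π * t) ^ (m + 2) - (2 * π * (l:ℝ) + π * t) ^ (m + 2)| ≤
        3 / 2 * π ^ m * C * |2 * (k : ℝ) + t| ^ m +
          3 / 2 * π ^ m * C * |2 * (l : ℝ) + t| ^ m := by
      have h3 := abs_sub_le ((2 * π * (k:ℝ) + π * t) ^ (m + 2)) lam.re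
        ((2 * π * (l:ℝ) + π * t) ^ (m + 2))
      rw [abs_sub_comm ((2 * π * (k:ℝ) + π * t) ^ (m + 2)) lam.re] at h3
      linarith
    have habs1 := (le_abs_self ((2 * π * (k:ℝ) + π * t) ^ (m + 2)
      - (2 * π * (l:ℝ) + π * t) ^ (m + 2))).trans htri
    have habs2 : (2 * π * (l:ℝ) + π * t) ^ (m + 2) - (2 * π * (k:ℝ) + π * t) ^ (m + 2) ≤
        3 / 2 * π ^ m * C * |2 * (k : ℝ) + t| ^ m +
          3 / 2 * π ^ m * C * |2 * (l : ℝ) + t| ^ m := by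
      calc (2 * π * (l:ℝ) + π * t) ^ (m + 2) - (2 * π * (k:ℝ) + π * t) ^ (m + 2)
          ≤ |(2 * π * (l:ℝ) + π * t) ^ (m + 2) - (2 * π * (k:ℝ) + π * t) ^ (m + 2)| :=
            le_abs_self _
        _ = |(2 * π * (k:ℝ) + π * t) ^ (m + 2) - (2 * π * (l:ℝ) + π * t) ^ (m + 2)| :=
            abs_sub_comm _ _
        _ ≤ _ := htri
    rcases le_abs.mp hk with hk' | hk' <;> rcases le_abs.mp hl with hl' | hl'
    · rcases hkl.lt_or_gt with h | h
      · linarith [hPP l k hk' h]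
      · linarith [hPP k l hl' h]
    · linarith [hPN k l hk' hl']
    · linarith [hPN l k hl' hk']
    · rcases hkl.lt_or_gt with h | h
      · linarith [hNN k l hl' h]
      · linarith [hNN l k hk' h]
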